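/- Let S be an m×n sign matrix and let S′ be any matrix obtained from S by permuting its rows. Then signrank(S) ≤ SC(S′) + 1, where SC(S′) is the maximum number of sign changes in any column of S′. -/
import Mathlib


/-- The sign-rank of an `m × n` sign matrix `S`: the minimum rank of a real matrix `M`
with `S i j * M i j > 0` for all `i, j`. -/
noncomputable def signRank {m n : ℕ} (S : Matrix (Fin m) (Fin n) ℝ) : ℕ :=
  sInf {r : ℕ | ∃ M : Matrix (Fin m) (Fin n) ℝ, M.rank = r ∧ ∀ i j, S i j * M i j > 0}

/-- `SC S`: the maximum, over all columns `j`, of the number of sign changes in column `j`,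
i.e. of pairs of consecutive row indices where the entries of column `j` differ. -/
noncomputable def maxColSignChanges {m n : ℕ} (S : Matrix (Fin m) (Fin n) ℝ) : ℕ :=
  Finset.univ.sup fun j : Fin n =>
    Nat.card {p : Fin m × Fin m // (p.2 : ℕ) = (p.1 : ℕ) + 1 ∧ S p.1 j ≠ S p.2 j}

open Finset Polynomial

/-- Sign sequence as product of parity of change count. -/
private lemma sign_seq_eq (s : ℕ → ℝ) (c : Finset ℕ) (m : ℕ)
    (hs : ∀ i, s i = 1 ∨ s i = -1)
    (hc : ∀ i, i + 1 < m → (i ∈ c ↔ s i ≠ s (i + 1)))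
    (hcm : ∀ i ∈ c, i + 1 < m) :
    ∀ i < m, s i = s 0 * (-1 : ℝ) ^ ((c.filter (· < i)).card) := by
  intro i
  induction i with
  | zero =>
    intro _
    have : c.filter (· < 0) = ∅ := by
      apply Finset.filter_false_of_mem; intro k _; omega
    simp [this]
  | succ i ih =>
    intro hm
    have hi : i < m := by omega
    by_cases hic : i ∈ c
    · have hne : s i ≠ s (i + 1) := (hc i (hcm i hic)).mp hic
      have hstep : s (i + 1) = -(s i) := by
        rcases hs i with h | h <;> rcases hs (i + 1) with h' | h' <;>
          simp [h, h'] at hne ⊢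
      have hfil : c.filter (· < i + 1) = insert i (c.filter (· < i)) := by
        ext k
        simp only [Finset.mem_filter, Finset.mem_insert]
        constructor
        · rintro ⟨hk, hlt⟩
          rcases Nat.lt_succ_iff_lt_or_eq.mp hlt with h | h
          · exact Or.inr ⟨hk, h⟩
          · exact Or.inl h
        · rintro (rfl | ⟨hk, hlt⟩)
          · exact ⟨hic, by omega⟩
          · exact ⟨hk, by omega⟩
      rw [hstep, ih hi, hfil, Finset.card_insert_of_notMem (by simp), pow_succ]
      ring
    · have heq : s (i + 1) = s i := by
        by_contra h
        exact hic ((hc i hm).mpr (fun h' => h h'.symm))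
      have hfil : c.filter (· < i + 1) = c.filter (· < i) := by
        ext k
        simp only [Finset.mem_filter]
        constructor
        · rintro ⟨hk, hlt⟩
          refine ⟨hk, ?_⟩
          rcases Nat.lt_succ_iff_lt_or_eq.mp hlt with h | rfl
          · exact h
          · exact absurd hk hic
        · rintro ⟨hk, hlt⟩; exact ⟨hk, by omega⟩
      rw [heq, ih hi, hfil]

private lemma key_pos (s : ℕ → ℝ) (c : Finset ℕ) (m : ℕ)
    (hs : ∀ i, s i = 1 ∨ s i = -1)
    (hc : ∀ i, i + 1 < m → (i ∈ c ↔ s i ≠ s (i + 1)))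
    (hcm : ∀ i ∈ c, i + 1 < m) :
    ∀ i < m, 0 < s i * (s 0 * ∏ k ∈ c, ((k : ℝ) + 1 / 2 - (i : ℕ))) := by
  intro i hi
  have hsq : s 0 * s 0 = 1 := by rcases hs 0 with h | h <;> rw [h] <;> norm_num
  rw [sign_seq_eq s c m hs hc hcm i hi]
  have hrw : s 0 * (-1 : ℝ) ^ ((c.filter (· < i)).card) *
      (s 0 * ∏ k ∈ c, ((k : ℝ) + 1 / 2 - (i : ℕ))) =
      (-1 : ℝ) ^ ((c.filter (· < i)).card) *
        ∏ k ∈ c, ((k : ℝ) + 1 / 2 - (i : ℕ)) := by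
    rw [show s 0 * (-1 : ℝ) ^ ((c.filter (· < i)).card) *
      (s 0 * ∏ k ∈ c, ((k : ℝ) + 1 / 2 - (i : ℕ))) =
      (s 0 * s 0) * ((-1 : ℝ) ^ ((c.filter (· < i)).card) *
        ∏ k ∈ c, ((k : ℝ) + 1 / 2 - (i : ℕ))) by ring, hsq, one_mul]
  rw [hrw, ← Finset.prod_filter_mul_prod_filter_not c (· < i)]
  have h1 : 0 < (-1 : ℝ) ^ ((c.filter (· < i)).card) *
      ∏ k ∈ c.filter (· < i), ((k : ℝ) + 1 / 2 - (i : ℕ)) := by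
    have : (-1 : ℝ) ^ ((c.filter (· < i)).card) *
        ∏ k ∈ c.filter (· < i), ((k : ℝ) + 1 / 2 - (i : ℕ)) =
        ∏ k ∈ c.filter (· < i), ((i : ℝ) - ((k : ℝ) + 1 / 2)) := by
      rw [show ∀ (F : Finset ℕ), ∏ k ∈ F, ((i : ℝ) - ((k : ℝ) + 1 / 2)) =
          ∏ k ∈ F, (-1 : ℝ) * ((k : ℝ) + 1 / 2 - (i : ℕ)) from
        fun F => Finset.prod_congr rfl (fun k _ => by ring),
        Finset.prod_mul_distrib, Finset.prod_const]
    rw [this]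
    apply Finset.prod_pos
    intro k hk
    have hk' : k < i := (Finset.mem_filter.mp hk).2
    have : (k : ℝ) + 1 ≤ (i : ℝ) := by exact_mod_cast hk'
    linarith
  have h2 : 0 < ∏ k ∈ c.filter (fun k => ¬ k < i), ((k : ℝ) + 1 / 2 - (i : ℕ)) := by
    apply Finset.prod_pos
    intro k hk
    have hk' : i ≤ k := Nat.le_of_not_lt (Finset.mem_filter.mp hk).2
    have : (i : ℝ) ≤ (k : ℝ) := by exact_mod_cast hk'
    linarith
  calc (0 : ℝ) < ((-1 : ℝ) ^ ((c.filter (· < i)).card) *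
        ∏ k ∈ c.filter (· < i), ((k : ℝ) + 1 / 2 - (i : ℕ))) *
        ∏ k ∈ c.filter (fun k => ¬ k < i), ((k : ℝ) + 1 / 2 - (i : ℕ)) :=
      mul_pos h1 h2
    _ = _ := by ring

/-- If `S′` is obtained from the sign matrix `S` by permuting its rows, then
`signrank S ≤ SC(S′) + 1`. -/
theorem signRank_le_signChanges_perm_add_one {m n : ℕ}
    (S : Matrix (Fin m) (Fin n) ℝ) (hS : ∀ i j, S i j = 1 ∨ S i j = -1)
    (σ : Equiv.Perm (Fin m)) :
    signRank S ≤ maxColSignChanges (S.submatrix σ id) + 1 := by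
  classical
  set S' : Matrix (Fin m) (Fin n) ℝ := S.submatrix σ id with hS'def
  set d : ℕ := maxColSignChanges S' with hddef
  set s : Fin n → ℕ → ℝ := fun j i => if h : i < m then S' ⟨i, h⟩ j else 1 with hsdef
  set c : Fin n → Finset ℕ :=
    fun j => (Finset.range m).filter (fun k => k + 1 < m ∧ s j k ≠ s j (k + 1)) with hcdef
  -- entries of s are ±1
  have hspm : ∀ j i, s j i = 1 ∨ s j i = -1 := by
    intro j i
    by_cases h : i < m
    · simp only [hsdef, dif_pos h]
      exact hS (σ ⟨i, h⟩) j
    · simp [hsdef, dif_neg h]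
  have hcmem : ∀ j k, k ∈ c j ↔ k + 1 < m ∧ s j k ≠ s j (k + 1) := by
    intro j k
    simp only [hcdef, Finset.mem_filter, Finset.mem_range]
    constructor
    · rintro ⟨_, h⟩; exact h
    · rintro ⟨h1, h2⟩; exact ⟨by omega, h1, h2⟩
  -- cardinality bound
  have hcard : ∀ j, (c j).card ≤ d := by
    intro j
    have hinj : ∃ f : {k // k ∈ c j} →
        {p : Fin m × Fin m // (p.2 : ℕ) = (p.1 : ℕ) + 1 ∧ S' p.1 j ≠ S' p.2 j},
        Function.Injective f := by
      refine ⟨fun ⟨k, hk⟩ => ?_, ?_⟩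
      · have h := (hcmem j k).mp hk
        have h1 : k + 1 < m := h.1
        have hkm : k < m := by omega
        refine ⟨(⟨k, hkm⟩, ⟨k + 1, h1⟩), rfl, ?_⟩
        have := h.2
        simpa only [hsdef, dif_pos hkm, dif_pos h1] using this
      · rintro ⟨k, hk⟩ ⟨k', hk'⟩ hf
        have : k = k' := congrArg (fun p => ((p : (Fin m × Fin m)).1 : ℕ)) (congrArg Subtype.val hf)
        exact Subtype.ext this
    obtain ⟨f, hf⟩ := hinj
    have h1 : (c j).card = Fintype.card {k // k ∈ c j} := (Fintype.card_coe _).symm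
    have h2 : Fintype.card {k // k ∈ c j} ≤
        Fintype.card {p : Fin m × Fin m // (p.2 : ℕ) = (p.1 : ℕ) + 1 ∧ S' p.1 j ≠ S' p.2 j} :=
      Fintype.card_le_of_injective f hf
    have h3 : Nat.card {p : Fin m × Fin m // (p.2 : ℕ) = (p.1 : ℕ) + 1 ∧ S' p.1 j ≠ S' p.2 j} ≤ d := by
      rw [hddef, maxColSignChanges]
      exact Finset.le_sup (f := fun j : Fin n => Nat.card
        {p : Fin m × Fin m // (p.2 : ℕ) = (p.1 : ℕ) + 1 ∧ S' p.1 j ≠ S' p.2 j})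
        (Finset.mem_univ j)
    rw [Nat.card_eq_fintype_card] at h3
    omega
  -- the polynomials
  set P : Fin n → Polynomial ℝ :=
    fun j => C (s j 0) * ∏ k ∈ c j, (C ((k : ℝ) + 1 / 2) - X) with hPdef
  have hdeg : ∀ j, (P j).natDegree < d + 1 := by
    intro j
    have h1 : (P j).natDegree ≤ (∏ k ∈ c j, (C ((k : ℝ) + 1 / 2) - X)).natDegree :=
      natDegree_C_mul_le _ _
    have h2 : (∏ k ∈ c j, (C ((k : ℝ) + 1 / 2) - X)).natDegree ≤
        ∑ k ∈ c j, (C ((k : ℝ) + 1 / 2) - X).natDegree := natDegree_prod_le _ _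
    have h3 : ∀ k : ℕ, (C ((k : ℝ) + 1 / 2) - X).natDegree = 1 := by
      intro k
      rw [show (C ((k : ℝ) + 1 / 2) - X) = -(X - C ((k : ℝ) + 1 / 2)) by ring,
        natDegree_neg, natDegree_X_sub_C]
    have h4 : ∑ k ∈ c j, (C ((k : ℝ) + 1 / 2) - X).natDegree = (c j).card * 1 :=
      Finset.sum_const_nat fun k _ => h3 k
    have := hcard j
    omega
  -- the matrix
  set M : Matrix (Fin m) (Fin n) ℝ :=
    fun i j => (P j).eval (((σ.symm i : Fin m) : ℕ) : ℝ) with hMdef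
  have heval : ∀ (j : Fin n) (x : ℝ),
      (P j).eval x = s j 0 * ∏ k ∈ c j, ((k : ℝ) + 1 / 2 - x) := by
    intro j x
    simp [hPdef, eval_prod]
  -- sign condition
  have hsign : ∀ i j, S i j * M i j > 0 := by
    intro i j
    have hkey := key_pos (s j) (c j) m (hspm j)
      (fun i hi => by
        rw [hcmem]
        constructor
        · rintro ⟨_, h⟩; exact h
        · intro h; exact ⟨hi, h⟩)
      (fun i hi => ((hcmem j i).mp hi).1)
      ((σ.symm i : Fin m) : ℕ) (σ.symm i).isLt
    have hSi : S i j = s j ((σ.symm i : Fin m) : ℕ) := by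
      simp only [hsdef, dif_pos (σ.symm i).isLt, Fin.eta]
      simp [hS'def, Matrix.submatrix_apply]
    rw [hMdef]
    simp only
    rw [heval j, hSi]
    exact hkey
  -- rank bound
  set V : Matrix (Fin m) (Fin (d + 1)) ℝ :=
    fun i t => (((σ.symm i : Fin m) : ℕ) : ℝ) ^ (t : ℕ) with hVdef
  set A : Matrix (Fin (d + 1)) (Fin n) ℝ := fun t j => (P j).coeff t with hAdef
  have hMVA : M = V * A := by
    ext i j
    rw [Matrix.mul_apply, hMdef]
    simp only
    rw [eval_eq_sum_range' (hdeg j)]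
    rw [← Fin.sum_univ_eq_sum_range
      (fun t => (P j).coeff t * (((σ.symm i : Fin m) : ℕ) : ℝ) ^ t) (d + 1)]
    exact Finset.sum_congr rfl fun t _ => (mul_comm _ _)
  have hrank : M.rank ≤ d + 1 := by
    calc M.rank = (V * A).rank := by rw [hMVA]
      _ ≤ V.rank := Matrix.rank_mul_le_left V A
      _ ≤ Fintype.card (Fin (d + 1)) := Matrix.rank_le_card_width V
      _ = d + 1 := Fintype.card_fin _
  have hmem : M.rank ∈ {r : ℕ | ∃ M' : Matrix (Fin m) (Fin n) ℝ,
      M'.rank = r ∧ ∀ i j, S i j * M' i j > 0} := ⟨M, rfl, hsign⟩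
  exact le_trans (Nat.sInf_le hmem) hrank
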